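/- In the setting of the lower-bound iteration: if ρ ≤ G_r(u), |v| > k − m contains all a_i with a_i > ρ and a_i < u, every element of v exceeds ρ, and ρ = (∑_{a∈v} a − (k−m)u)/(|v| − (k−m)), then ρ = G_r(u). -/

import Mathlib

open Finset

/-- The entries of `a` rearranged in nonincreasing order. -/
noncomputable def sortDesc (n : ℕ) (a : Fin n → ℝ) : Fin n → ℝ :=
  fun i => a (Tuple.sort a i.rev)

/-- The sum of the `k` largest entries of `a`. -/
noncomputable def topKSum (n k : ℕ) (a : Fin n → ℝ) : ℝ :=
  ∑ i : Fin n, if (i : ℕ) < k then sortDesc n a i else 0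
/-- The relaxed function `g_r(u, l)`. -/
noncomputable def grfun (n k : ℕ) (a : Fin n → ℝ) (u l : ℝ) : ℝ :=
  (∑ i : Fin n, max (a i - u) 0) - (∑ i : Fin n, max (a i - l) 0) + k * (u - l)

/-- Convexity of `x ↦ max (c - x) 0` pointwise. -/
lemma aux_convex (c r l lam : ℝ) (h0 : 0 ≤ lam) (h1 : lam ≤ 1) :
    max (c - (lam * r + (1 - lam) * l)) 0
      ≤ lam * max (c - r) 0 + (1 - lam) * max (c - l) 0 := by
  have hr1 : c - r ≤ max (c - r) 0 := le_max_left _ _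
  have hl1 : c - l ≤ max (c - l) 0 := le_max_left _ _
  have hr0 : (0:ℝ) ≤ max (c - r) 0 := le_max_right _ _
  have hl0 : (0:ℝ) ≤ max (c - l) 0 := le_max_right _ _
  apply max_le
  · nlinarith
  · nlinarith

set_option maxHeartbeats 1000000 in
/-- Termination of the lower-bound iteration: if `ρ ≤ G_r(u)`, `v` contains every
entry `a_i` with `ρ < a_i < u`, every element of `v` exceeds `ρ`, `|v| > k − m`,
and `ρ` equals the stated ratio, then `ρ = G_r(u)`. -/
theorem stmt15 (n k : ℕ) (hn : 2 ≤ n) (hk1 : 1 ≤ k) (hk : k < n) (a : Fin n → ℝ)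
    (u Gu : ℝ) (hu : sortDesc n a ⟨k - 1, by omega⟩ < u)
    (hGu : Gu < u) (hroot : grfun n k a u Gu = 0)
    (m : ℕ) (hm : m = (Finset.univ.filter fun i : Fin n => u ≤ a i).card)
    (hmk : m < k)
    (v : Multiset ℝ)
    (hhigh : v ≤ (Finset.univ.val.map a).filter (fun x => x < u))
    (ρ : ℝ) (hρGu : ρ ≤ Gu)
    (hcard : (k : ℝ) - (m : ℝ) < (Multiset.card v : ℝ))
    (hcontain : (Finset.univ.val.map a).filter (fun x => ρ < x ∧ x < u) ≤ v)
    (habove : ∀ x ∈ v, ρ < x)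
    (hρ : ρ = (v.sum - ((k : ℝ) - (m : ℝ)) * u)
        / ((Multiset.card v : ℝ) - ((k : ℝ) - (m : ℝ)))) :
    ρ = Gu := by
  by_contra hne
  have hρltGu : ρ < Gu := lt_of_le_of_ne hρGu hne
  have hρu : ρ < u := hρltGu.trans hGu
  have hmkR : (m : ℝ) < (k : ℝ) := by exact_mod_cast hmk
  -- the multiset v is exactly the entries strictly between ρ and u
  have hv : v = (Finset.univ.val.map a).filter (fun x => ρ < x ∧ x < u) := by
    refine le_antisymm ?_ hcontain
    refine Multiset.le_filter.2 ⟨le_trans hhigh (Multiset.filter_le _ _), ?_⟩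
    intro x hx
    exact ⟨habove x hx, (Multiset.mem_filter.1 (Multiset.mem_of_le hhigh hx)).2⟩
  classical
  set A := Finset.univ.filter (fun i : Fin n => ρ < a i ∧ a i < u) with hA
  have hvsum : v.sum = ∑ i ∈ A, a i := by
    rw [hv, Multiset.filter_map, Finset.sum]
    rfl
  have hvcard : (Multiset.card v : ℕ) = A.card := by
    rw [hv, Multiset.filter_map, Multiset.card_map]
    rfl
  -- the sum over A from hρ
  have hd : (0:ℝ) < (A.card : ℝ) - ((k : ℝ) - (m : ℝ)) := by
    rw [← hvcard]; linarith
  have hAsum : ∑ i ∈ A, a i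
      = ρ * ((A.card : ℝ) - ((k : ℝ) - (m : ℝ))) + ((k : ℝ) - (m : ℝ)) * u := by
    have h := hρ
    rw [hvcard, hvsum, eq_div_iff hd.ne'] at h
    linarith
  -- notation for the sums
  set Su := ∑ i : Fin n, max (a i - u) 0 with hSu
  set Sρ := ∑ i : Fin n, max (a i - ρ) 0 with hSρ
  set SGu := ∑ i : Fin n, max (a i - Gu) 0 with hSGu
  -- value at ρ: Su - Sρ = -k (u - ρ)
  have hE1 : Su - Sρ = -(k : ℝ) * (u - ρ) := by
    have step : ∀ i : Fin n, max (a i - u) 0 - max (a i - ρ) 0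
        = (if u ≤ a i then ρ - u else 0)
          + (if ρ < a i ∧ a i < u then ρ - a i else 0) := by
      intro i
      rcases le_or_gt u (a i) with h | h
      · rw [if_pos h, if_neg (fun hc => absurd hc.2 (not_lt.2 h)),
          max_eq_left (by linarith), max_eq_left (by linarith)]
        ring
      · rcases lt_or_ge ρ (a i) with h2 | h2
        · rw [if_neg (not_le.2 h), if_pos ⟨h2, h⟩,
            max_eq_right (by linarith), max_eq_left (by linarith)]
          ring
        · rw [if_neg (not_le.2 h), if_neg (fun hc => absurd hc.1 (not_lt.2 h2)),
            max_eq_right (by linarith), max_eq_right (by linarith)]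
          ring
    have := Finset.sum_congr rfl (fun i (_ : i ∈ Finset.univ) => step i)
    rw [Finset.sum_sub_distrib] at this
    rw [this, Finset.sum_add_distrib, ← Finset.sum_filter, ← Finset.sum_filter,
      Finset.sum_const, ← hm, ← hA, Finset.sum_sub_distrib, Finset.sum_const,
      nsmul_eq_mul, nsmul_eq_mul, hAsum]
    ring
  -- a point l with Gu < l < u and all entries below u also below l
  haveI : NeZero n := ⟨by omega⟩
  set t := max Gu (Finset.univ.sup' Finset.univ_nonempty
      (fun i : Fin n => if a i < u then a i else Gu)) with ht
  have htu : t < u := by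
    refine max_lt hGu ((Finset.sup'_lt_iff _).2 fun i _ => ?_)
    split_ifs with h
    · exact h
    · exact hGu
  set l := (t + u) / 2 with hl
  have htl : t < l := by rw [hl]; linarith
  have hlu : l < u := by rw [hl]; linarith
  have hGul : Gu < l := lt_of_le_of_lt (le_max_left _ _) htl
  have hai : ∀ i : Fin n, a i < u → a i ≤ t := by
    intro i h
    calc a i = (if a i < u then a i else Gu) := (if_pos h).symm
      _ ≤ _ := Finset.le_sup' (fun i : Fin n => if a i < u then a i else Gu) (Finset.mem_univ i)
      _ ≤ t := le_max_right _ _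
  set Sl := ∑ i : Fin n, max (a i - l) 0 with hSl
  have hE3 : Su - Sl = -(m : ℝ) * (u - l) := by
    have step : ∀ i : Fin n, max (a i - u) 0 - max (a i - l) 0
        = (if u ≤ a i then l - u else 0) := by
      intro i
      rcases le_or_gt u (a i) with h | h
      · rw [if_pos h, max_eq_left (by linarith), max_eq_left (by linarith)]
        ring
      · have h2 : a i ≤ t := hai i h
        rw [if_neg (not_le.2 h), max_eq_right (by linarith),
          max_eq_right (by linarith)]
        ring
    have := Finset.sum_congr rfl (fun i (_ : i ∈ Finset.univ) => step i)
    rw [Finset.sum_sub_distrib] at this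
    rw [this, ← Finset.sum_filter, Finset.sum_const, ← hm, nsmul_eq_mul]
    ring
  -- the convexity inequality
  set lam := (l - Gu) / (l - ρ) with hlam
  have hlρ : ρ < l := hρltGu.trans hGul
  have hden : (0:ℝ) < l - ρ := by linarith
  have hlam0 : 0 < lam := div_pos (by linarith) hden
  have hlam1 : lam < 1 := (div_lt_one hden).2 (by linarith)
  have hcomb : Gu = lam * ρ + (1 - lam) * l := by
    have hlm : lam * (l - ρ) = l - Gu := by rw [hlam]; exact div_mul_cancel₀ _ hden.ne'
    linear_combination hlm
  have hconv : SGu ≤ lam * Sρ + (1 - lam) * Sl := by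
    rw [hSGu, hSρ, hSl, Finset.mul_sum, Finset.mul_sum, ← Finset.sum_add_distrib]
    refine Finset.sum_le_sum fun i _ => ?_
    rw [hcomb]
    exact aux_convex (a i) ρ l lam hlam0.le hlam1.le
  -- final contradiction
  have hE2 : Su - SGu + (k : ℝ) * (u - Gu) = 0 := hroot
  have e1 : Sρ = Su + (k : ℝ) * (u - ρ) := by linarith
  have e3 : Sl = Su + (m : ℝ) * (u - l) := by linarith
  have e2 : SGu = Su + (k : ℝ) * (u - Gu) := by linarith
  rw [e1, e2, e3, hcomb] at hconv
  have hkey : (1 - lam) * (((k : ℝ) - (m : ℝ)) * (u - l)) ≤ 0 := by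
    nlinarith [hconv]
  have : (0:ℝ) < (1 - lam) * (((k : ℝ) - (m : ℝ)) * (u - l)) :=
    mul_pos (by linarith) (mul_pos (by linarith) (by linarith))
  linarith
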